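/- arXiv:2301.03186 — 2 statements merged into one kernel-verified Lean document; each statement's English description precedes it below -/
import Mathlib

section
/- Fix a real L with 0 < L < 1 and reals y_0, y_1 with log(1/L − 1) < y_0 < y_1, and fix any y with log(1/L − 1) < y < y_1. Let Y_1, …, Y_n be reals with y_0 ≤ Y_i ≤ y_1 for all i. Then n·(a_1·m_2 + b_1·m_1 + c_1) ≤ Σ_{i=1}^n log(1 + L·(e^{Y_i} − 1)), where a_1, b_1, c_1 are the quadratic coefficients determined by L, y and y_1. (This is the lower bound of Theorem 3.) -/
noncomputable def pf (L t : ℝ) : ℝ := 1 + L * (Real.exp t - 1)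
noncomputable def ff (L t : ℝ) : ℝ := Real.log (pf L t)
noncomputable def f1 (L t : ℝ) : ℝ := L * Real.exp t / pf L t
noncomputable def f2 (L t : ℝ) : ℝ := L * Real.exp t * (1 - L) / (pf L t) ^ 2

lemma pf_pos {L : ℝ} (hL0 : 0 < L) (hL1 : L < 1) (t : ℝ) : 0 < pf L t := by
  have := Real.exp_pos t
  unfold pf; nlinarith

lemma hasDerivAt_pf (L t : ℝ) : HasDerivAt (pf L) (L * Real.exp t) t := by
  have h := (((Real.hasDerivAt_exp t).sub_const 1).const_mul L).const_add 1
  exact h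

lemma hasDerivAt_ff {L : ℝ} (hL0 : 0 < L) (hL1 : L < 1) (t : ℝ) :
    HasDerivAt (ff L) (f1 L t) t := by
  have h := (hasDerivAt_pf L t).log (pf_pos hL0 hL1 t).ne'
  exact h

lemma hasDerivAt_f1 {L : ℝ} (hL0 : 0 < L) (hL1 : L < 1) (t : ℝ) :
    HasDerivAt (f1 L) (f2 L t) t := by
  have hnum : HasDerivAt (fun s => L * Real.exp s) (L * Real.exp t) t :=
    (Real.hasDerivAt_exp t).const_mul L
  have h := hnum.div (hasDerivAt_pf L t) (pf_pos hL0 hL1 t).ne'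
  have he : (L * Real.exp t * pf L t - L * Real.exp t * (L * Real.exp t)) / (pf L t) ^ 2
      = f2 L t := by
    unfold f2 pf; ring
  rw [he] at h
  exact h

lemma f2_anti {L s t : ℝ} (hL0 : 0 < L) (hL1 : L < 1)
    (hs : Real.log (1 / L - 1) < s) (hst : s < t) : f2 L t < f2 L s := by
  have hD : (0:ℝ) < 1 - L := by linarith
  have hpos : (0:ℝ) < 1 / L - 1 := by
    rw [lt_sub_iff_add_lt, zero_add, lt_div_iff₀ hL0, one_mul]; exact hL1
  have hes : 1 / L - 1 < Real.exp s := (Real.log_lt_iff_lt_exp hpos).mp hs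
  have hu : 1 - L < L * Real.exp s := by
    have := mul_lt_mul_of_pos_left hes hL0
    field_simp at this
    nlinarith
  have hv : L * Real.exp s < L * Real.exp t := by
    have := Real.exp_lt_exp.mpr hst
    nlinarith [Real.exp_pos s]
  set u := L * Real.exp s with hu'
  set v := L * Real.exp t with hv'
  have hps : pf L s = u + (1 - L) := by unfold pf; ring
  have hpt : pf L t = v + (1 - L) := by unfold pf; ring
  unfold f2
  rw [show L * Real.exp s = u from rfl, show L * Real.exp t = v from rfl]
  rw [hps, hpt]
  rw [div_lt_div_iff₀ (by positivity) (by positivity)]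
  nlinarith [mul_pos (sub_pos.mpr hv) (show (0:ℝ) < u * v - (1-L)^2 by nlinarith), hD]

section
variable {L y1 y a b c : ℝ}

lemma quad_facts (hL0 : 0 < L) (hL1 : L < 1) (hy1 : y < y1)
    (ha : a = (1 / (y - y1)) *
      (Real.log ((1 + L * (Real.exp y1 - 1)) / (1 + L * (Real.exp y - 1))) / (y - y1)
        + L * Real.exp y / (1 + L * (Real.exp y - 1))))
    (hb : b = L * Real.exp y / (1 + L * (Real.exp y - 1)) - 2 * a * y)
    (hc : c = Real.log (1 + L * (Real.exp y1 - 1)) - a * y1 ^ 2 - b * y1) :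
    (a * y ^ 2 + b * y + c = ff L y) ∧ (2 * a * y + b = f1 L y) ∧
      (a * y1 ^ 2 + b * y1 + c = ff L y1) := by
  have hne : y - y1 ≠ 0 := by intro h; linarith [hy1, sub_eq_zero.mp h]
  have hlog : Real.log ((1 + L * (Real.exp y1 - 1)) / (1 + L * (Real.exp y - 1)))
      = ff L y1 - ff L y := by
    show Real.log (pf L y1 / pf L y) = _
    rw [Real.log_div (pf_pos hL0 hL1 y1).ne' (pf_pos hL0 hL1 y).ne']; rfl
  rw [hlog] at ha
  have hf1 : L * Real.exp y / (1 + L * (Real.exp y - 1)) = f1 L y := rfl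
  rw [hf1] at ha hb
  have hffy1 : Real.log (1 + L * (Real.exp y1 - 1)) = ff L y1 := rfl
  rw [hffy1] at hc
  have haa : a * (y - y1) ^ 2 = (ff L y1 - ff L y) + f1 L y * (y - y1) := by
    field_simp at ha
    linarith [ha]
  refine ⟨?_, by rw [hb]; ring, ?_⟩
  · rw [hc, hb]; linear_combination -haa
  · rw [hc]; ring
end

lemma key {L y1 y a b c : ℝ} (hL0 : 0 < L) (hL1 : L < 1)
    (hy0 : Real.log (1 / L - 1) < y) (hy1 : y < y1)
    (e0 : a * y ^ 2 + b * y + c = ff L y) (e1 : 2 * a * y + b = f1 L y)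
    (e2 : a * y1 ^ 2 + b * y1 + c = ff L y1)
    (t : ℝ) (ht0 : Real.log (1 / L - 1) < t) (ht1 : t ≤ y1) :
    a * t ^ 2 + b * t + c ≤ ff L t := by
  set g : ℝ → ℝ := fun s => ff L s - (a * s ^ 2 + b * s + c) with hgdef
  set g1 : ℝ → ℝ := fun s => f1 L s - (2 * a * s + b) with hg1def
  have hg : ∀ s, HasDerivAt g (g1 s) s := by
    intro s
    have hquad : HasDerivAt (fun s : ℝ => a * s ^ 2 + b * s + c) (2 * a * s + b) s := by
      have h := (((hasDerivAt_pow 2 s).const_mul a).add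
        ((hasDerivAt_id s).const_mul b)).add_const c
      refine h.congr_deriv ?_
      push_cast; ring
    exact (hasDerivAt_ff hL0 hL1 s).sub hquad
  have hg1 : ∀ s, HasDerivAt g1 (f2 L s - 2 * a) s := by
    intro s
    have hlin : HasDerivAt (fun s : ℝ => 2 * a * s + b) (2 * a) s := by
      have h := ((hasDerivAt_id s).const_mul (2 * a)).add_const b
      simpa using h
    exact (hasDerivAt_f1 hL0 hL1 s).sub hlin
  have gy : g y = 0 := by simp only [hgdef]; rw [e0]; ring
  have g1y : g1 y = 0 := by simp only [hg1def]; rw [← e1]; ring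
  have gy1 : g y1 = 0 := by simp only [hgdef]; rw [e2]; ring
  have gcont : ∀ u v : ℝ, ContinuousOn g (Set.Icc u v) :=
    fun u v => fun x _ => (hg x).continuousAt.continuousWithinAt
  have g1cont : ∀ u v : ℝ, ContinuousOn g1 (Set.Icc u v) :=
    fun u v => fun x _ => (hg1 x).continuousAt.continuousWithinAt
  -- strict antitonicity of g1 past a point where f2 - 2a < 0
  have hg1anti : ∀ z2, Real.log (1 / L - 1) < z2 → f2 L z2 - 2 * a < 0 →
      StrictAntiOn g1 (Set.Icc z2 y1) := by
    intro z2 hz2 hneg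
    apply strictAntiOn_of_deriv_neg (convex_Icc _ _) (g1cont _ _)
    intro x hx
    rw [interior_Icc] at hx
    rw [(hg1 x).deriv]
    have := f2_anti hL0 hL1 hz2 hx.1
    linarith
  by_contra hcon
  push_neg at hcon
  have hgt : g t < 0 := by simp only [hgdef]; linarith
  rcases lt_trichotomy t y with hty | hty | hty
  · -- t < y
    obtain ⟨z1, hz1, hz1s⟩ := exists_hasDerivAt_eq_slope g g1 hty (gcont t y)
      (fun x _ => hg x)
    have hg1z1 : 0 < g1 z1 := by
      rw [hz1s, gy]
      exact div_pos (by linarith) (by linarith)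
    obtain ⟨z2, hz2, hz2s⟩ := exists_hasDerivAt_eq_slope g1 (fun s => f2 L s - 2 * a)
      hz1.2 (g1cont z1 y) (fun x _ => hg1 x)
    have hneg : f2 L z2 - 2 * a < 0 := by
      rw [hz2s, g1y]
      apply div_neg_of_neg_of_pos (by linarith) (by linarith [hz1.2, hz2.1, hz2.2])
    have hanti := hg1anti z2 (by linarith [hz1.1, hz2.1]) hneg
    have g1neg : ∀ x ∈ Set.Ioo y y1, g1 x < 0 := by
      intro x hx
      have hxm : x ∈ Set.Icc z2 y1 := ⟨by linarith [hz2.2, hx.1], hx.2.le⟩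
      have hym : y ∈ Set.Icc z2 y1 := ⟨hz2.2.le, hy1.le⟩
      have := hanti hym hxm hx.1
      rw [g1y] at this; exact this
    have ganti : StrictAntiOn g (Set.Icc y y1) := by
      apply strictAntiOn_of_deriv_neg (convex_Icc _ _) (gcont _ _)
      intro x hx
      rw [interior_Icc] at hx
      rw [(hg x).deriv]
      exact g1neg x hx
    have := ganti ⟨le_refl y, hy1.le⟩ ⟨hy1.le, le_refl y1⟩ hy1
    rw [gy, gy1] at this
    linarith
  · rw [hty] at hgt
    linarith
  · rcases eq_or_lt_of_le ht1 with h | h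
    · rw [h] at hgt; linarith
    obtain ⟨z1, hz1, hz1s⟩ := exists_hasDerivAt_eq_slope g g1 hty (gcont y t)
      (fun x _ => hg x)
    have hg1z1 : g1 z1 < 0 := by
      rw [hz1s, gy]
      apply div_neg_of_neg_of_pos (by linarith) (by linarith)
    obtain ⟨z2, hz2, hz2s⟩ := exists_hasDerivAt_eq_slope g1 (fun s => f2 L s - 2 * a)
      hz1.1 (g1cont y z1) (fun x _ => hg1 x)
    have hneg : f2 L z2 - 2 * a < 0 := by
      rw [hz2s, g1y]
      apply div_neg_of_neg_of_pos (by linarith) (by linarith [hz1.1, hz2.1, hz2.2])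
    have hanti := hg1anti z2 (by linarith [hz2.1]) hneg
    have g1neg : ∀ x ∈ Set.Ioo z1 y1, g1 x < 0 := by
      intro x hx
      have hxm : x ∈ Set.Icc z2 y1 := ⟨by linarith [hz2.2, hx.1], hx.2.le⟩
      have hz1m : z1 ∈ Set.Icc z2 y1 := ⟨hz2.2.le, by linarith [hz1.2]⟩
      have := hanti hz1m hxm hx.1
      linarith
    have ganti : StrictAntiOn g (Set.Icc z1 y1) := by
      apply strictAntiOn_of_deriv_neg (convex_Icc _ _) (gcont _ _)
      intro x hx
      rw [interior_Icc] at hx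
      rw [(hg x).deriv]
      exact g1neg x hx
    have := ganti ⟨hz1.2.le, ht1⟩ ⟨by linarith [hz1.2], le_refl y1⟩ h
    rw [gy1] at this
    linarith


theorem stmt_4 (L y0 y1 y : ℝ) (hL0 : 0 < L) (hL1 : L < 1)
    (h0 : Real.log (1 / L - 1) < y0) (h01 : y0 < y1) (hy0 : Real.log (1 / L - 1) < y) (hy1 : y < y1)
    (n : ℕ) (Y : Fin n → ℝ) (hY : ∀ i, y0 ≤ Y i ∧ Y i ≤ y1)
    (a b c m1 m2 : ℝ)
    (ha : a = (1 / (y - y1)) *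
      (Real.log ((1 + L * (Real.exp y1 - 1)) / (1 + L * (Real.exp y - 1))) / (y - y1)
        + L * Real.exp y / (1 + L * (Real.exp y - 1))))
    (hb : b = L * Real.exp y / (1 + L * (Real.exp y - 1)) - 2 * a * y)
    (hc : c = Real.log (1 + L * (Real.exp y1 - 1)) - a * y1 ^ 2 - b * y1)
    (hm1 : m1 = (1 / (n : ℝ)) * ∑ i, Y i)
    (hm2 : m2 = (1 / (n : ℝ)) * ∑ i, (Y i) ^ 2) :
    (n : ℝ) * (a * m2 + b * m1 + c) ≤ ∑ i, Real.log (1 + L * (Real.exp (Y i) - 1)) := by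
  obtain ⟨e0, e1, e2⟩ := quad_facts hL0 hL1 hy1 ha hb hc
  have hpt : ∀ i, a * (Y i) ^ 2 + b * (Y i) + c ≤ Real.log (1 + L * (Real.exp (Y i) - 1)) := by
    intro i
    exact key hL0 hL1 hy0 hy1 e0 e1 e2 (Y i) (lt_of_lt_of_le h0 (hY i).1) (hY i).2
  have hsum : ∑ i, (a * (Y i) ^ 2 + b * (Y i) + c)
      ≤ ∑ i, Real.log (1 + L * (Real.exp (Y i) - 1)) :=
    Finset.sum_le_sum (fun i _ => hpt i)
  rcases Nat.eq_zero_or_pos n with hn | hn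
  · subst hn; simp
  have hne : (n : ℝ) ≠ 0 := Nat.cast_ne_zero.mpr hn.ne'
  have hexp : ∑ i, (a * (Y i) ^ 2 + b * (Y i) + c)
      = a * ∑ i, (Y i) ^ 2 + b * ∑ i, Y i + (n : ℝ) * c := by
    rw [Finset.sum_add_distrib, Finset.sum_add_distrib, ← Finset.mul_sum, ← Finset.mul_sum,
      Finset.sum_const]
    simp [Finset.card_univ]
  have heq : (n : ℝ) * (a * m2 + b * m1 + c)
      = ∑ i, (a * (Y i) ^ 2 + b * (Y i) + c) := by
    rw [hm1, hm2, hexp]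
    field_simp
  linarith
end

section
/- Fix reals L > 1, L_0 < L, r ≥ 0, and y_0, y_1 with log(1 − 1/L) < y_0 < y_1, and fix any y > y_0. Let Y_1, …, Y_n be reals with y_0 ≤ Y_i ≤ y_1, set m_1 = (1/n)·Σ Y_i, m_2 = (1/n)·Σ Y_i², and s = sqrt(m_2 − m_1²). Let a_0, b_0, c_0 be the quadratic coefficients determined by L, y and y_0. If the radicand −m_1² + ((L_0 − b_0)/a_0)·m_1 − (c_0 − log(1 + r/252))/a_0 is nonnegative and s ≤ sqrt( −m_1² + ((L_0 − b_0)/a_0)·m_1 − (c_0 − log(1 + r/252))/a_0 ), then L_0·n·m_1 ≤ Σ_{i=1}^n log(1 + L·(e^{Y_i} − 1)) − n·log(1 + r/252); that is, the log-return of the L-times daily leveraged ETF with expense ratio r is at least L_0 times the log-return of the benchmark index. -/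
open Real Set Finset

private lemma etf_pos {L x : ℝ} (hL : 1 < L) (hx : Real.log (1 - 1 / L) < x) :
    0 < 1 + L * (Real.exp x - 1) := by
  have hL0 : (0:ℝ) < L := by linarith
  have h1 : (0:ℝ) < 1 - 1 / L := by
    have : 1 / L < 1 := by rw [div_lt_one hL0]; linarith
    linarith
  have h2 : 1 - 1 / L < Real.exp x := by
    have := Real.exp_lt_exp.2 hx
    rwa [Real.exp_log h1] at this
  have h3 : L * (1 - 1 / L) < L * Real.exp x := (mul_lt_mul_iff_right₀ hL0).2 h2
  have h4 : L * (1 - 1 / L) = L - 1 := by field_simp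
  linarith

private lemma hasDerivAt_P (L x : ℝ) :
    HasDerivAt (fun t => 1 + L * (Real.exp t - 1)) (L * Real.exp x) x := by
  simpa using (((Real.hasDerivAt_exp x).sub_const 1).const_mul L).const_add 1

noncomputable def Ff (L t : ℝ) : ℝ := L * Real.exp t / (1 + L * (Real.exp t - 1))
noncomputable def Gf (L t : ℝ) : ℝ :=
  -((L - 1) * (L * Real.exp t)) / (1 + L * (Real.exp t - 1)) ^ 2

private lemma hasDerivAt_logP {L x : ℝ} (hL : 1 < L) (hx : Real.log (1 - 1 / L) < x) :
    HasDerivAt (fun t => Real.log (1 + L * (Real.exp t - 1))) (Ff L x) x :=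
  (hasDerivAt_P L x).log (etf_pos hL hx).ne'

private lemma hasDerivAt_Ff {L x : ℝ} (hL : 1 < L) (hx : Real.log (1 - 1 / L) < x) :
    HasDerivAt (Ff L) (Gf L x) x := by
  have hP := etf_pos hL hx
  have h := ((Real.hasDerivAt_exp x).const_mul L).div (hasDerivAt_P L x) hP.ne'
  convert h using 1
  · rfl
  · rfl
  · rfl
  unfold Gf
  rw [div_eq_div_iff (by positivity) (pow_ne_zero 2 hP.ne')]
  ring

private lemma Ff_anti {L x1 x2 : ℝ} (hL : 1 < L) (hx1 : Real.log (1 - 1 / L) < x1)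
    (h12 : x1 < x2) : Ff L x2 < Ff L x1 := by
  have hP1 := etf_pos hL hx1
  have hP2 := etf_pos hL (lt_trans hx1 h12)
  have he := Real.exp_lt_exp.2 h12
  unfold Ff
  rw [div_lt_div_iff₀ hP2 hP1]
  nlinarith [mul_pos (mul_pos (by linarith : (0:ℝ) < L) (by linarith : (0:ℝ) < L - 1))
    (sub_pos.2 he)]

private lemma Gf_mono {L x1 x2 : ℝ} (hL : 1 < L) (hx1 : Real.log (1 - 1 / L) < x1)
    (h12 : x1 < x2) : Gf L x1 < Gf L x2 := by
  have hP1 := etf_pos hL hx1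
  have hP2 := etf_pos hL (lt_trans hx1 h12)
  have he := Real.exp_lt_exp.2 h12
  have hk : (0:ℝ) < L - 1 := by linarith
  have hu1 : L - 1 < L * Real.exp x1 := by linarith
  have hu2 : L - 1 < L * Real.exp x2 := by linarith
  have hd : 0 < L * Real.exp x2 - L * Real.exp x1 := by nlinarith
  have hp : 0 < (L * Real.exp x1) * (L * Real.exp x2) - (L - 1) * (L - 1) := by nlinarith
  unfold Gf
  rw [div_lt_div_iff₀ (pow_pos hP1 2) (pow_pos hP2 2)]
  nlinarith [mul_pos (mul_pos hk hd) hp]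

noncomputable def fl (L t : ℝ) : ℝ := Real.log (1 + L * (Real.exp t - 1))
noncomputable def gq (L a b c t : ℝ) : ℝ := fl L t - (a * t ^ 2 + b * t + c)
noncomputable def Hq (L a b t : ℝ) : ℝ := Ff L t - (2 * a * t + b)

private lemma hasDerivAt_gq {L x : ℝ} (a b c : ℝ) (hL : 1 < L)
    (hx : Real.log (1 - 1 / L) < x) :
    HasDerivAt (gq L a b c) (Hq L a b x) x := by
  have h1 : HasDerivAt (fun t : ℝ => a * t ^ 2 + b * t + c) (2 * a * x + b) x := by
    have h2 := (((hasDerivAt_pow 2 x).const_mul a).add ((hasDerivAt_id x).const_mul b)).add_const c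
    convert h2 using 1
    · rfl
    · rfl
    · rfl
    simp
    ring
  exact (hasDerivAt_logP hL hx).sub h1

private lemma hasDerivAt_Hq {L x : ℝ} (a b : ℝ) (hL : 1 < L)
    (hx : Real.log (1 - 1 / L) < x) :
    HasDerivAt (Hq L a b) (Gf L x - 2 * a) x := by
  have h1 : HasDerivAt (fun t : ℝ => 2 * a * t + b) (2 * a) x := by
    simpa using ((hasDerivAt_id x).const_mul (2 * a)).add_const b
  exact (hasDerivAt_Ff hL hx).sub h1

private lemma quad_le_log {L y0 y a b c : ℝ} (hL : 1 < L)
    (h0 : Real.log (1 - 1 / L) < y0) (hy : y0 < y)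
    (ha : a = (1 / (y - y0)) *
      (Real.log ((1 + L * (Real.exp y0 - 1)) / (1 + L * (Real.exp y - 1))) / (y - y0)
        + L * Real.exp y / (1 + L * (Real.exp y - 1))))
    (hb : b = L * Real.exp y / (1 + L * (Real.exp y - 1)) - 2 * a * y)
    (hc : c = Real.log (1 + L * (Real.exp y0 - 1)) - a * y0 ^ 2 - b * y0) :
    a < 0 ∧ ∀ x, y0 ≤ x → a * x ^ 2 + b * x + c ≤ Real.log (1 + L * (Real.exp x - 1)) := by
  have hdy : Real.log (1 - 1 / L) < y := lt_trans h0 hy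
  have hne : y - y0 ≠ 0 := by intro h; linarith [sub_eq_zero.1 h]
  have hPy0 := etf_pos hL h0
  have hPy := etf_pos hL hdy
  -- key identity for a
  have ha2 : a * (y - y0) ^ 2 =
      (Real.log (1 + L * (Real.exp y0 - 1)) - Real.log (1 + L * (Real.exp y - 1)))
        + (L * Real.exp y / (1 + L * (Real.exp y - 1))) * (y - y0) := by
    rw [ha, Real.log_div hPy0.ne' hPy.ne']
    field_simp
  -- values of g and H at endpoints
  have hgy0 : gq L a b c y0 = 0 := by unfold gq fl; rw [hc]; ring
  have hHy : Hq L a b y = 0 := by unfold Hq Ff; rw [hb]; ring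
  have hgy : gq L a b c y = 0 := by
    unfold gq fl; rw [hc, hb]; linear_combination ha2
  -- a < 0 via MVT and strict antitonicity of Ff
  have hflc : ∀ (s : Set ℝ), s ⊆ Ioi (Real.log (1 - 1 / L)) →
      ContinuousOn (fl L) s := fun s hs x hx => by
    have := (hasDerivAt_logP hL (hs hx)).continuousAt
    exact (this.congr (by filter_upwards with t; unfold fl; rfl)).continuousWithinAt
  obtain ⟨η, hη, hηe⟩ := exists_hasDerivAt_eq_slope (fl L) (Ff L) hy
    (hflc _ (fun x hx => lt_of_lt_of_le h0 hx.1))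
    (fun x hx => by
      have := hasDerivAt_logP hL (lt_trans h0 hx.1)
      exact this.congr_of_eventuallyEq (by filter_upwards with t; unfold fl; rfl))
  have hηy : Ff L y < Ff L η := Ff_anti hL (lt_trans h0 hη.1) hη.2
  have hηe' : Ff L η * (y - y0) = fl L y - fl L y0 := by
    field_simp at hηe
    linarith [hηe]
  have haneg : a < 0 := by
    have h5 : a * (y - y0) ^ 2 = (Ff L y - Ff L η) * (y - y0) := by
      unfold fl at hηe'
      unfold Ff at hηe' ⊢
      linear_combination ha2 + hηe'
    nlinarith [pow_pos (sub_pos.2 hy) 2, mul_neg_of_neg_of_pos (sub_neg.2 hηy) (sub_pos.2 hy)]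
  refine ⟨haneg, ?_⟩
  intro x hx
  have hcontg : ∀ (s : Set ℝ), s ⊆ Ioi (Real.log (1 - 1 / L)) →
      ContinuousOn (gq L a b c) s :=
    fun s hs t ht => ((hasDerivAt_gq a b c hL (hs ht)).continuousAt).continuousWithinAt
  have hcontH : ∀ (s : Set ℝ), s ⊆ Ioi (Real.log (1 - 1 / L)) →
      ContinuousOn (Hq L a b) s :=
    fun s hs t ht => ((hasDerivAt_Hq a b hL (hs ht)).continuousAt).continuousWithinAt
  obtain ⟨ξ, hξ, hHξ⟩ := exists_hasDerivAt_eq_zero hy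
    (hcontg _ (fun t ht => lt_of_lt_of_le h0 ht.1)) (hgy0.trans hgy.symm)
    (fun t ht => hasDerivAt_gq a b c hL (lt_trans h0 ht.1))
  have hdξ : Real.log (1 - 1 / L) < ξ := lt_trans h0 hξ.1
  obtain ⟨ζ, hζ, hKζ⟩ := exists_hasDerivAt_eq_zero hξ.2
    (hcontH _ (fun t ht => lt_of_lt_of_le hdξ ht.1)) (hHξ.trans hHy.symm)
    (fun t ht => hasDerivAt_Hq a b hL (lt_trans hdξ ht.1))
  have hdζ : Real.log (1 - 1 / L) < ζ := lt_trans hdξ hζ.1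
  have hKneg : ∀ t, Real.log (1 - 1 / L) < t → t < ζ → Gf L t - 2 * a ≤ 0 := by
    intro t h1 h2
    have := Gf_mono hL h1 h2
    linarith
  have hKpos : ∀ t, ζ < t → 0 ≤ Gf L t - 2 * a := by
    intro t h2
    have := Gf_mono hL hdζ h2
    linarith
  have hHanti : AntitoneOn (Hq L a b) (Icc y0 ζ) := by
    refine antitoneOn_of_hasDerivWithinAt_nonpos (f' := fun t => Gf L t - 2 * a) (convex_Icc _ _)
      (hcontH _ (fun t ht => lt_of_lt_of_le h0 ht.1))
      (fun t ht => ?_) (fun t ht => ?_)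
    · rw [interior_Icc] at ht
      exact (hasDerivAt_Hq a b hL (lt_trans h0 ht.1)).hasDerivWithinAt
    · rw [interior_Icc] at ht
      exact hKneg t (lt_trans h0 ht.1) ht.2
  have hHmono : MonotoneOn (Hq L a b) (Ici ζ) := by
    refine monotoneOn_of_hasDerivWithinAt_nonneg (f' := fun t => Gf L t - 2 * a) (convex_Ici _)
      (hcontH _ (fun t ht => lt_of_lt_of_le hdζ ht))
      (fun t ht => ?_) (fun t ht => ?_)
    · rw [interior_Ici] at ht
      exact (hasDerivAt_Hq a b hL (lt_trans hdζ ht)).hasDerivWithinAt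
    · rw [interior_Ici] at ht
      exact hKpos t ht
  have hξζ : ξ < ζ := hζ.1
  have hζy : ζ < y := hζ.2
  have hHneg : ∀ t, ξ ≤ t → t ≤ y → Hq L a b t ≤ 0 := by
    intro t ht1 ht2
    rcases le_total t ζ with h | h
    · linarith [hHanti ⟨hξ.1.le, hξζ.le⟩ ⟨le_trans hξ.1.le ht1, h⟩ ht1]
    · linarith [hHmono h hζy.le ht2]
  have hHpos1 : ∀ t, y0 ≤ t → t ≤ ξ → 0 ≤ Hq L a b t := by
    intro t ht1 ht2
    linarith [hHanti ⟨ht1, le_trans ht2 hξζ.le⟩ ⟨hξ.1.le, hξζ.le⟩ ht2]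
  have hHpos2 : ∀ t, y ≤ t → 0 ≤ Hq L a b t := by
    intro t ht
    linarith [hHmono hζy.le (le_trans hζy.le ht) ht]
  have hg1 : MonotoneOn (gq L a b c) (Icc y0 ξ) := by
    refine monotoneOn_of_hasDerivWithinAt_nonneg (f' := Hq L a b) (convex_Icc _ _)
      (hcontg _ (fun t ht => lt_of_lt_of_le h0 ht.1))
      (fun t ht => ?_) (fun t ht => ?_)
    · rw [interior_Icc] at ht
      exact (hasDerivAt_gq a b c hL (lt_trans h0 ht.1)).hasDerivWithinAt
    · rw [interior_Icc] at ht
      exact hHpos1 t ht.1.le ht.2.le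
  have hg2 : AntitoneOn (gq L a b c) (Icc ξ y) := by
    refine antitoneOn_of_hasDerivWithinAt_nonpos (f' := Hq L a b) (convex_Icc _ _)
      (hcontg _ (fun t ht => lt_of_lt_of_le hdξ ht.1))
      (fun t ht => ?_) (fun t ht => ?_)
    · rw [interior_Icc] at ht
      exact (hasDerivAt_gq a b c hL (lt_trans hdξ ht.1)).hasDerivWithinAt
    · rw [interior_Icc] at ht
      exact hHneg t ht.1.le ht.2.le
  have hg3 : MonotoneOn (gq L a b c) (Ici y) := by
    refine monotoneOn_of_hasDerivWithinAt_nonneg (f' := Hq L a b) (convex_Ici _)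
      (hcontg _ (fun t ht => lt_of_lt_of_le hdy ht))
      (fun t ht => ?_) (fun t ht => ?_)
    · rw [interior_Ici] at ht
      exact (hasDerivAt_gq a b c hL (lt_trans hdy ht)).hasDerivWithinAt
    · rw [interior_Ici] at ht
      exact hHpos2 t ht.le
  have hgx : 0 ≤ gq L a b c x := by
    rcases le_total x y with hxy | hxy
    · rcases le_total x ξ with hxξ | hxξ
      · have := hg1 ⟨le_refl y0, hξ.1.le⟩ ⟨hx, hxξ⟩ hx
        linarith [hgy0]
      · have := hg2 ⟨hxξ, hxy⟩ ⟨hξ.2.le, le_refl y⟩ hxy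
        linarith [hgy]
    · have := hg3 (le_refl y) hxy hxy
      linarith [hgy]
  unfold gq fl at hgx
  linarith

theorem stmt_18 (L L0 r y0 y1 y : ℝ) (hL : 1 < L) (hL0 : L0 < L) (hr : 0 ≤ r)
    (h0 : Real.log (1 - 1 / L) < y0) (h01 : y0 < y1) (hy : y0 < y)
    (n : ℕ) (Y : Fin n → ℝ) (hY : ∀ i, y0 ≤ Y i ∧ Y i ≤ y1)
    (a b c m1 m2 s : ℝ)
    (ha : a = (1 / (y - y0)) *
      (Real.log ((1 + L * (Real.exp y0 - 1)) / (1 + L * (Real.exp y - 1))) / (y - y0)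
        + L * Real.exp y / (1 + L * (Real.exp y - 1))))
    (hb : b = L * Real.exp y / (1 + L * (Real.exp y - 1)) - 2 * a * y)
    (hc : c = Real.log (1 + L * (Real.exp y0 - 1)) - a * y0 ^ 2 - b * y0)
    (hm1 : m1 = (1 / (n : ℝ)) * ∑ i, Y i)
    (hm2 : m2 = (1 / (n : ℝ)) * ∑ i, (Y i) ^ 2)
    (hs : s = Real.sqrt (m2 - m1 ^ 2))
    (hrad : 0 ≤ -m1 ^ 2 + ((L0 - b) / a) * m1 - (c - Real.log (1 + r / 252)) / a)
    (hsle : s ≤ Real.sqrt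
      (-m1 ^ 2 + ((L0 - b) / a) * m1 - (c - Real.log (1 + r / 252)) / a)) :
    L0 * (n : ℝ) * m1 ≤
      (∑ i, Real.log (1 + L * (Real.exp (Y i) - 1))) -
        (n : ℝ) * Real.log (1 + r / 252) := by
  obtain ⟨haneg, hquad⟩ := quad_le_log hL h0 hy ha hb hc
  rcases Nat.eq_zero_or_pos n with rfl | hnpos
  · subst hm1
    simp
  have hn : (0:ℝ) < (n : ℝ) := by exact_mod_cast hnpos
  set lg := Real.log (1 + r / 252) with hlg
  set S1 := ∑ i, Y i with hS1
  set S2 := ∑ i, (Y i) ^ 2 with hS2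
  have e1 : (n : ℝ) * m1 = S1 := by rw [hm1]; field_simp
  have e2 : (n : ℝ) * m2 = S2 := by rw [hm2]; field_simp
  -- variance nonneg
  have hchev : S1 ^ 2 ≤ (n : ℝ) * S2 := by
    have h := sq_sum_le_card_mul_sum_sq (s := (Finset.univ : Finset (Fin n))) (f := Y)
    simpa [hS1, hS2] using h
  have hvar : m1 ^ 2 ≤ m2 := by
    have h1 : (0:ℝ) ≤ ((1:ℝ) / n) ^ 2 := by positivity
    have h2 : ((1:ℝ)/n)^2 * (S1^2) ≤ ((1:ℝ)/n)^2 * ((n:ℝ) * S2) :=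
      mul_le_mul_of_nonneg_left hchev h1
    have h3 : ((1:ℝ)/n)^2 * ((n:ℝ) * S2) = (1/(n:ℝ)) * S2 := by
      field_simp
    rw [hm1, hm2, mul_pow]
    linarith
  -- from hsle : m2 - m1^2 ≤ radicand
  have hRle : m2 - m1 ^ 2 ≤ -m1 ^ 2 + ((L0 - b) / a) * m1 - (c - lg) / a := by
    have hs0 : 0 ≤ s := hs ▸ Real.sqrt_nonneg _
    have h1 : s ^ 2 ≤ (Real.sqrt (-m1 ^ 2 + ((L0 - b) / a) * m1 - (c - lg) / a)) ^ 2 :=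
      pow_le_pow_left₀ hs0 hsle 2
    rw [Real.sq_sqrt hrad] at h1
    have h2 : s ^ 2 = m2 - m1 ^ 2 := by
      rw [hs, Real.sq_sqrt (by linarith)]
    linarith
  have hL0m : L0 * m1 ≤ a * m2 + b * m1 + c - lg := by
    have h1 : m2 ≤ (L0 - b) / a * m1 - (c - lg) / a := by linarith
    have h2 : a * ((L0 - b) / a * m1 - (c - lg) / a) ≤ a * m2 :=
      mul_le_mul_of_nonpos_left h1 haneg.le
    have h3 : a * ((L0 - b) / a * m1 - (c - lg) / a) = (L0 - b) * m1 - (c - lg) := by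
      field_simp [haneg.ne]
    rw [h3] at h2
    linarith
  -- pointwise bound and sum
  have hsum : a * S2 + b * S1 + (n : ℝ) * c ≤ ∑ i, Real.log (1 + L * (Real.exp (Y i) - 1)) := by
    have h := Finset.sum_le_sum (fun i (_ : i ∈ Finset.univ) => hquad (Y i) (hY i).1)
    have heq : ∑ i, (a * (Y i) ^ 2 + b * (Y i) + c) = a * S2 + b * S1 + (n : ℝ) * c := by
      rw [Finset.sum_add_distrib, Finset.sum_add_distrib, ← Finset.mul_sum, ← Finset.mul_sum,
        Finset.sum_const, Finset.card_univ, Fintype.card_fin, nsmul_eq_mul]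
    linarith [heq ▸ h]
  calc L0 * (n : ℝ) * m1 = (n : ℝ) * (L0 * m1) := by ring
    _ ≤ (n : ℝ) * (a * m2 + b * m1 + c - lg) := mul_le_mul_of_nonneg_left hL0m hn.le
    _ = a * ((n:ℝ) * m2) + b * ((n:ℝ) * m1) + (n:ℝ) * c - (n:ℝ) * lg := by ring
    _ = a * S2 + b * S1 + (n:ℝ) * c - (n:ℝ) * lg := by rw [e1, e2]
    _ ≤ (∑ i, Real.log (1 + L * (Real.exp (Y i) - 1))) - (n : ℝ) * lg := by linarith
end
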